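/- Let d be a positive squarefree integer with d ≡ 3 (mod 4). Then the families p ↦ (1 − 1/p + 1/(p + χ(p))) (over all primes p) and p ↦ (1 − (χ(p)² + χ(p))/p² + 1/p³) (over all primes p) are multipliable over the primes, and ∏_{p prime} (1 − 1/p + 1/(p + χ(p))) · ∏_{p prime, p ∣ d} (1 + p⁻³)/(1 − p⁻²) = (π²/6) · ∏_{p prime} (1 − (χ(p)² + χ(p))/p² + 1/p³). -/

import Mathlib

/-- The quadratic character attached to `ℚ(√-d)`, defined on primes:
`χ(2) = (-1)^((d²-1)/8)` and `χ(p) = (-d/p)` (Legendre symbol) for odd primes `p`;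
`0` off the primes. -/
noncomputable def chi (d : ℕ) (p : ℕ) : ℤ :=
  if hp : p.Prime then
    if p = 2 then (-1) ^ ((d ^ 2 - 1) / 8)
    else @legendreSym p ⟨hp⟩ (-(d : ℤ))
  else 0

/- ## Auxiliary lemmas -/

lemma chi_eq_zero_of_dvd {d p : ℕ} (hp : p.Prime) (hmod : d % 4 = 3) (hdvd : p ∣ d) :
    chi d p = 0 := by
  have hp2 : p ≠ 2 := by rintro rfl; omega
  haveI : Fact p.Prime := ⟨hp⟩
  rw [chi, dif_pos hp, if_neg hp2, legendreSym.eq_zero_iff]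
  push_cast
  rw [neg_eq_zero]
  exact (ZMod.natCast_eq_zero_iff d p).mpr hdvd

lemma chi_eq_one_or_neg_one {d p : ℕ} (hp : p.Prime) (hndvd : ¬ p ∣ d) :
    chi d p = 1 ∨ chi d p = -1 := by
  by_cases hp2 : p = 2
  · subst hp2
    rw [chi, dif_pos hp, if_pos rfl]
    rcases Nat.even_or_odd ((d ^ 2 - 1) / 8) with h | h
    · exact Or.inl h.neg_one_pow
    · exact Or.inr h.neg_one_pow
  · haveI : Fact p.Prime := ⟨hp⟩
    rw [chi, dif_pos hp, if_neg hp2]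
    apply legendreSym.eq_one_or_neg_one
    push_cast
    rw [neg_ne_zero, Ne, ZMod.natCast_eq_zero_iff]
    exact hndvd

lemma abs_log_le_two_mul {x : ℝ} (hx : 1/2 ≤ x) : |Real.log x| ≤ 2 * |x - 1| := by
  have hx0 : 0 < x := by linarith
  rcases le_or_gt 1 x with h | h
  · rw [abs_of_nonneg (Real.log_nonneg h), abs_of_nonneg (by linarith)]
    have := Real.log_le_sub_one_of_pos hx0
    linarith
  · rw [abs_of_nonpos (Real.log_nonpos hx0.le h.le), abs_of_neg (by linarith)]
    have h2 : Real.log x⁻¹ ≤ x⁻¹ - 1 := Real.log_le_sub_one_of_pos (by positivity)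
    rw [Real.log_inv] at h2
    have hinv : x * x⁻¹ = 1 := mul_inv_cancel₀ hx0.ne'
    nlinarith [mul_nonneg (by linarith : (0:ℝ) ≤ 2*x - 1) (by linarith : (0:ℝ) ≤ 1 - x)]

lemma summable_primes_div_sq (C : ℝ) :
    Summable (fun p : Nat.Primes => C / ((p : ℕ) : ℝ)^2) := by
  have h : Summable (fun n : ℕ => C * (1 / (n : ℝ)^2)) :=
    (Real.summable_one_div_nat_pow.mpr one_lt_two).mul_left C
  have h2 := h.subtype {p : ℕ | p.Prime}
  exact h2.congr (fun p => by rw [Function.comp_apply]; ring)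

lemma multipliable_aux (g : Nat.Primes → ℝ) (C : ℝ)
    (h1 : ∀ p : Nat.Primes, 1/2 ≤ g p)
    (h2 : ∀ p : Nat.Primes, |g p - 1| ≤ C / ((p : ℕ) : ℝ)^2) :
    Multipliable g := by
  have hpos : ∀ p, 0 < g p := fun p => lt_of_lt_of_le (by norm_num) (h1 p)
  have hlog : Summable (fun p : Nat.Primes => Real.log (g p)) := by
    apply Summable.of_abs
    apply Summable.of_nonneg_of_le (fun p => abs_nonneg _) ?_ (summable_primes_div_sq (2*C))
    intro p
    calc |Real.log (g p)| ≤ 2 * |g p - 1| := abs_log_le_two_mul (h1 p)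
      _ ≤ 2 * (C / ((p : ℕ) : ℝ)^2) := by have := h2 p; linarith
      _ = 2 * C / ((p : ℕ) : ℝ)^2 := by ring
  exact Real.multipliable_of_summable_log hpos hlog

-- bounds for the `a` family
lemma aux_a (x c : ℝ) (hx : 2 ≤ x) (hc : c = 0 ∨ c = 1 ∨ c = -1) :
    1/2 ≤ 1 - 1/x + 1/(x+c) ∧ |1 - 1/x + 1/(x+c) - 1| ≤ 2/x^2 := by
  have hx0 : 0 < x := by linarith
  rcases hc with rfl | rfl | rfl
  · have h : 1 - 1/x + 1/(x+0) = 1 := by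
      rw [add_zero]; field_simp; ring
    rw [h]
    constructor
    · norm_num
    · simp; positivity
  · have h : 1 - 1/x + 1/(x+1) - 1 = -(1/(x*(x+1))) := by
      field_simp; ring
    have hb : 1/(x*(x+1)) ≤ 2/x^2 := by
      rw [div_le_div_iff₀ (by positivity) (by positivity)]; nlinarith
    have hs : 1/(x*(x+1)) ≤ 1/2 := by
      rw [div_le_div_iff₀ (by positivity) (by norm_num)]; nlinarith
    constructor
    · nlinarith [h]
    · rw [show 1 - 1/x + 1/(x+1) - 1 = -(1/(x*(x+1))) from h, abs_neg,
        abs_of_nonneg (by positivity)]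
      exact hb
  · have hx1 : 0 < x - 1 := by linarith
    have hx1' : x - 1 ≠ 0 := hx1.ne'
    have h : 1 - 1/x + 1/(x+(-1)) - 1 = 1/(x*(x-1)) := by
      rw [show x + (-1:ℝ) = x - 1 by ring]
      field_simp; ring
    have hb : 1/(x*(x-1)) ≤ 2/x^2 := by
      rw [div_le_div_iff₀ (by positivity) (by positivity)]; nlinarith
    have hnn : (0:ℝ) ≤ 1/(x*(x-1)) := by positivity
    constructor
    · nlinarith [h]
    · rw [show 1 - 1/x + 1/(x+(-1)) - 1 = 1/(x*(x-1)) from h,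
        abs_of_nonneg hnn]
      exact hb

-- bounds for the `b` family, in terms of `u = 1/x`
lemma aux_b (u c : ℝ) (hu0 : 0 < u) (hu : u ≤ 1/2) (hc : c = 0 ∨ c = 1 ∨ c = -1) :
    1/2 ≤ 1 - (c^2+c)*u^2 + u^3 ∧ |1 - (c^2+c)*u^2 + u^3 - 1| ≤ 3*u^2 := by
  have h1 : u^2 ≤ 1/4 := by nlinarith
  have h2 : u^3 ≤ u^2 := by nlinarith
  have h3 : 0 < u^3 := by positivity
  have habs : |u|^3 ≤ 3 * u^2 := by
    rw [abs_of_nonneg hu0.le]; nlinarith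
  rcases hc with rfl | rfl | rfl <;> norm_num <;> constructor
  · nlinarith
  · exact habs
  · nlinarith
  · rw [abs_le]; constructor <;> nlinarith
  · nlinarith
  · exact habs

-- bounds for the zeta factor
lemma aux_z (u : ℝ) (hu0 : 0 < u) (hu : u ≤ 1/2) :
    1/2 ≤ (1 - u^2)⁻¹ ∧ |(1 - u^2)⁻¹ - 1| ≤ 2*u^2 := by
  have h1 : u^2 ≤ 1/4 := by nlinarith
  have hpos : (0:ℝ) < 1 - u^2 := by nlinarith
  have he : (1 - u^2)⁻¹ - 1 = u^2/(1-u^2) := by field_simp; ring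
  have hb : u^2/(1-u^2) ≤ 2*u^2 := by
    rw [div_le_iff₀ hpos]; nlinarith
  have hnn : (0:ℝ) ≤ u^2/(1-u^2) := by positivity
  constructor
  · nlinarith [he]
  · rw [he, abs_of_nonneg hnn]; exact hb

-- bounds for the finite-factor family
lemma aux_f (u : ℝ) (hu0 : 0 < u) (hu : u ≤ 1/2) :
    1/2 ≤ (1 + u^3)/(1 - u^2) ∧ |(1 + u^3)/(1 - u^2) - 1| ≤ 3*u^2 := by
  have h1 : u^2 ≤ 1/4 := by nlinarith
  have h2 : u^3 ≤ u^2 := by nlinarith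
  have hpos : (0:ℝ) < 1 - u^2 := by nlinarith
  have he : (1 + u^3)/(1 - u^2) - 1 = (u^3 + u^2)/(1-u^2) := by
    field_simp; ring
  have hb : (u^3 + u^2)/(1-u^2) ≤ 3*u^2 := by
    rw [div_le_iff₀ hpos]; nlinarith
  have hnn : (0:ℝ) ≤ (u^3 + u^2)/(1-u^2) := by positivity
  constructor
  · nlinarith [he]
  · rw [he, abs_of_nonneg hnn]; exact hb

-- the pointwise identity
lemma aux_id (x c : ℝ) (hx : 2 ≤ x) (hc : c = 1 ∨ c = -1) :
    (1 - 1/x + 1/(x+c)) = (1 - x⁻¹^2)⁻¹ * (1 - (c^2+c)/x^2 + 1/x^3) := by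
  have hx0 : 0 < x := by linarith
  have hxne : x ≠ 0 := hx0.ne'
  have hx1 : x - 1 ≠ 0 := ne_of_gt (by linarith)
  have hx1' : x + 1 ≠ 0 := by positivity
  have hx21 : x^2 - 1 ≠ 0 := ne_of_gt (by nlinarith)
  have hA : (1 - x⁻¹^2) = (x^2-1)/x^2 := by field_simp
  rw [hA, inv_div]
  rcases hc with rfl | rfl
  · field_simp
    ring
  · rw [show x + (-1:ℝ) = x - 1 by ring]
    field_simp
    ring

lemma aux_id0 (x : ℝ) (hx : 2 ≤ x) :
    (1 - 1/x + 1/(x+0)) * ((1 + x⁻¹^3)/(1 - x⁻¹^2)) =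
      (1 - x⁻¹^2)⁻¹ * (1 - (0^2+0)/x^2 + 1/x^3) := by
  have hx0 : 0 < x := by linarith
  have hxne : x ≠ 0 := hx0.ne'
  have hden : 1 - x⁻¹^2 ≠ 0 := by
    have h4 : (4:ℝ) ≤ x^2 := by nlinarith
    have : x⁻¹^2 = 1/x^2 := by rw [inv_pow]; rw [one_div]
    rw [this]
    have : 1/x^2 ≤ 1/4 := by
      rw [div_le_div_iff₀ (by positivity) (by norm_num)]; linarith
    intro h; nlinarith [h]
  rw [add_zero]
  field_simp
  ring

theorem leading_constant_identity (d : ℕ) (hd : 0 < d) (hsq : Squarefree d)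
    (hmod : d % 4 = 3) :
    Multipliable (fun p : Nat.Primes =>
      (1 - 1 / (p.1 : ℝ) + 1 / ((p.1 : ℝ) + (chi d p.1 : ℝ)))) ∧
    Multipliable (fun p : Nat.Primes =>
      (1 - (((chi d p.1 : ℝ)) ^ 2 + (chi d p.1 : ℝ)) / (p.1 : ℝ) ^ 2 + 1 / (p.1 : ℝ) ^ 3)) ∧
    (∏' p : Nat.Primes, (1 - 1 / (p.1 : ℝ) + 1 / ((p.1 : ℝ) + (chi d p.1 : ℝ)))) *
        (∏ p ∈ d.primeFactors, (1 + ((p : ℝ))⁻¹ ^ 3) / (1 - ((p : ℝ))⁻¹ ^ 2)) =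
      (Real.pi ^ 2 / 6) *
        ∏' p : Nat.Primes,
          (1 - (((chi d p.1 : ℝ)) ^ 2 + (chi d p.1 : ℝ)) / (p.1 : ℝ) ^ 2 + 1 / (p.1 : ℝ) ^ 3) := by
  classical
  set a : Nat.Primes → ℝ := fun p =>
    1 - 1 / (p.1 : ℝ) + 1 / ((p.1 : ℝ) + (chi d p.1 : ℝ)) with ha_def
  set b : Nat.Primes → ℝ := fun p =>
    1 - (((chi d p.1 : ℝ)) ^ 2 + (chi d p.1 : ℝ)) / (p.1 : ℝ) ^ 2 + 1 / (p.1 : ℝ) ^ 3 with hb_def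
  set z : Nat.Primes → ℝ := fun p => (1 - ((p.1 : ℝ))⁻¹ ^ 2)⁻¹ with hz_def
  set f : Nat.Primes → ℝ := fun p =>
    if p.1 ∣ d then (1 + ((p.1 : ℝ))⁻¹ ^ 3) / (1 - ((p.1 : ℝ))⁻¹ ^ 2) else 1 with hf_def
  have hp2 : ∀ p : Nat.Primes, (2 : ℝ) ≤ (p.1 : ℝ) := by
    intro p; exact_mod_cast p.2.two_le
  have hp0 : ∀ p : Nat.Primes, (0 : ℝ) < (p.1 : ℝ) := fun p => by have := hp2 p; linarith
  have hu0 : ∀ p : Nat.Primes, (0:ℝ) < ((p.1 : ℝ))⁻¹ := fun p => inv_pos.mpr (hp0 p)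
  have hu : ∀ p : Nat.Primes, ((p.1 : ℝ))⁻¹ ≤ 1/2 := by
    intro p
    rw [inv_le_iff_one_le_mul₀ (hp0 p)]
    · nlinarith [hp2 p]
  have hchi : ∀ p : Nat.Primes,
      (chi d p.1 : ℝ) = 0 ∨ (chi d p.1 : ℝ) = 1 ∨ (chi d p.1 : ℝ) = -1 := by
    intro p
    by_cases hdvd : p.1 ∣ d
    · left; rw [chi_eq_zero_of_dvd p.2 hmod hdvd]; norm_num
    · rcases chi_eq_one_or_neg_one p.2 hdvd with h | h <;> rw [h] <;> norm_num
  have hchi_dvd : ∀ p : Nat.Primes, p.1 ∣ d → (chi d p.1 : ℝ) = 0 := by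
    intro p hdvd; rw [chi_eq_zero_of_dvd p.2 hmod hdvd]; norm_num
  have hchi_ndvd : ∀ p : Nat.Primes, ¬ p.1 ∣ d →
      (chi d p.1 : ℝ) = 1 ∨ (chi d p.1 : ℝ) = -1 := by
    intro p hdvd
    rcases chi_eq_one_or_neg_one p.2 hdvd with h | h <;> rw [h] <;> norm_num
  -- rewrite b in `u`-form
  have hb_u : ∀ p : Nat.Primes, b p =
      1 - (((chi d p.1 : ℝ))^2 + (chi d p.1 : ℝ)) * ((p.1:ℝ))⁻¹^2 + ((p.1:ℝ))⁻¹^3 := by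
    intro p
    rw [hb_def]
    have : (p.1:ℝ) ≠ 0 := (hp0 p).ne'
    field_simp
  -- multipliability
  have hMa : Multipliable a := by
    apply multipliable_aux a 2
    · intro p
      exact (aux_a _ _ (hp2 p) (hchi p)).1
    · intro p
      exact (aux_a _ _ (hp2 p) (hchi p)).2
  have hMb : Multipliable b := by
    apply multipliable_aux b 3
    · intro p
      rw [hb_u p]
      exact (aux_b _ _ (hu0 p) (hu p) (hchi p)).1
    · intro p
      rw [hb_u p]
      have := (aux_b _ _ (hu0 p) (hu p) (hchi p)).2
      calc |1 - (((chi d p.1 : ℝ))^2 + (chi d p.1 : ℝ)) * ((p.1:ℝ))⁻¹^2 + ((p.1:ℝ))⁻¹^3 - 1|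
          ≤ 3 * ((p.1:ℝ))⁻¹^2 := this
        _ = 3 / ((p.1:ℝ))^2 := by rw [inv_pow]; ring
  have hMz : Multipliable z := by
    apply multipliable_aux z 2
    · intro p; exact (aux_z _ (hu0 p) (hu p)).1
    · intro p
      have := (aux_z _ (hu0 p) (hu p)).2
      calc |z p - 1| ≤ 2 * ((p.1:ℝ))⁻¹^2 := this
        _ = 2 / ((p.1:ℝ))^2 := by rw [inv_pow]; ring
  have hMf : Multipliable f := by
    apply multipliable_aux f 3
    · intro p
      simp only [hf_def]
      split
      · exact (aux_f _ (hu0 p) (hu p)).1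
      · norm_num
    · intro p
      simp only [hf_def]
      split
      · have := (aux_f _ (hu0 p) (hu p)).2
        calc |(1 + ((p.1:ℝ))⁻¹^3)/(1 - ((p.1:ℝ))⁻¹^2) - 1| ≤ 3 * ((p.1:ℝ))⁻¹^2 := this
          _ = 3 / ((p.1:ℝ))^2 := by rw [inv_pow]; ring
      · simp
        positivity
  refine ⟨hMa, hMb, ?_⟩
  -- pointwise identity a * f = z * b
  have key : ∀ p : Nat.Primes, a p * f p = z p * b p := by
    intro p
    by_cases hdvd : p.1 ∣ d
    · have hc0 := hchi_dvd p hdvd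
      simp only [ha_def, hb_def, hz_def, hf_def, hc0, if_pos hdvd]
      have := aux_id0 (p.1:ℝ) (hp2 p)
      rw [add_zero] at this ⊢
      convert this using 2 <;> norm_num
    · have hc := hchi_ndvd p hdvd
      simp only [ha_def, hb_def, hz_def, hf_def, if_neg hdvd, mul_one]
      exact aux_id (p.1:ℝ) _ (hp2 p) hc
  -- the finite product
  have hF : ∏' p : Nat.Primes, f p
      = ∏ p ∈ d.primeFactors, (1 + ((p : ℝ))⁻¹ ^ 3) / (1 - ((p : ℝ))⁻¹ ^ 2) := by
    set emb : {x // x ∈ d.primeFactors} ↪ Nat.Primes :=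
      ⟨fun q => ⟨q.1, Nat.prime_of_mem_primeFactors q.2⟩,
        by
        intro q r h
        have h2 := congrArg (fun t : Nat.Primes => t.1) h
        exact Subtype.ext h2⟩ with hemb
    set sfin : Finset Nat.Primes := d.primeFactors.attach.map emb with hsfin
    have hmem : ∀ q : Nat.Primes, q ∈ sfin ↔ q.1 ∈ d.primeFactors := by
      intro q
      constructor
      · intro hq
        rw [hsfin, Finset.mem_map] at hq
        obtain ⟨r, -, rfl⟩ := hq
        exact r.2
      · intro hq
        rw [hsfin, Finset.mem_map]
        exact ⟨⟨q.1, hq⟩, Finset.mem_attach _ _, Subtype.ext rfl⟩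
    have hone : ∀ q ∉ sfin, f q = 1 := by
      intro q hq
      rw [hmem] at hq
      have : ¬ q.1 ∣ d := fun hdvd => hq (Nat.mem_primeFactors.mpr ⟨q.2, hdvd, hd.ne'⟩)
      simp only [hf_def]
      rw [if_neg this]
    rw [tprod_eq_prod hone]
    rw [hsfin, Finset.prod_map]
    rw [← Finset.prod_attach d.primeFactors
      (fun p => (1 + ((p : ℝ))⁻¹ ^ 3) / (1 - ((p : ℝ))⁻¹ ^ 2))]
    apply Finset.prod_congr rfl
    intro q _
    simp only [hf_def]
    rw [if_pos (show ((emb q).1 : ℕ) ∣ d from Nat.dvd_of_mem_primeFactors q.2)]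
    rfl
  -- the zeta value
  have hZ : ∏' p : Nat.Primes, z p = Real.pi ^ 2 / 6 := by
    apply Complex.ofReal_injective
    have hmap := hMz.map_tprod Complex.ofRealHom.toMonoidHom Complex.continuous_ofReal
    have hcongr : ∀ p : Nat.Primes,
        (Complex.ofRealHom.toMonoidHom (z p) : ℂ) = (1 - (p.1:ℂ) ^ (-(2:ℂ)))⁻¹ := by
      intro p
      have hpc : ((p.1:ℂ)) ≠ 0 := by
        exact_mod_cast (hp0 p).ne'
      have hcpow : (p.1:ℂ) ^ (-(2:ℂ)) = ((p.1:ℂ)^(2:ℕ))⁻¹ := by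
        rw [show (-(2:ℂ)) = -((2:ℕ):ℂ) by norm_num, Complex.cpow_neg, Complex.cpow_natCast]
      rw [hcpow]
      simp only [hz_def]
      show ((((1 - ((p.1:ℝ))⁻¹ ^ 2)⁻¹ : ℝ)) : ℂ) = ((1:ℂ) - ((p.1:ℂ)^(2:ℕ))⁻¹)⁻¹
      push_cast
      rw [inv_pow]
    have h2 : ((∏' p : Nat.Primes, z p : ℝ) : ℂ)
        = ∏' p : Nat.Primes, (1 - (p.1:ℂ) ^ (-(2:ℂ)))⁻¹ := by
      rw [show (((∏' p : Nat.Primes, z p : ℝ)) : ℂ)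
          = Complex.ofRealHom.toMonoidHom (∏' p : Nat.Primes, z p) from rfl, hmap]
      exact tprod_congr hcongr
    rw [h2, riemannZeta_eulerProduct_tprod (by norm_num), riemannZeta_two]
    push_cast
    ring
  -- put everything together
  rw [← hF, ← Multipliable.tprod_mul hMa hMf, tprod_congr key, Multipliable.tprod_mul hMz hMb, hZ]
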